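/- Let X be a set of n points in general position in ℝ^d with n ≥ r(d+2), and suppose t ≥ 0 is such that some partition A₁, …, A_r of X satisfies ⋂_{i=1}^r conv(A_i \ Y) ≠ ∅ for all Y ⊆ X with |Y| ≤ t. Then ⌊n/r⌋ ≥ t + ⌊d/2⌋. Consequently T(n, d, r) ≤ ⌊n/r⌋ − ⌊d/2⌋. -/

import Mathlib

/-- `X` is in general position: every `d+1` of its points are affinely independent. -/
def GenPos {d : ℕ} (X : Finset (Fin d → ℝ)) : Prop :=
  ∀ s : Finset (Fin d → ℝ), s ⊆ X → s.card = d + 1 →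
    AffineIndependent ℝ (fun p : (s : Set (Fin d → ℝ)) => (p : Fin d → ℝ))

variable {d : ℕ}


open Finset in
lemma gp_subset {X : Finset (Fin d → ℝ)} (hgp : GenPos X) (hX : d + 1 ≤ X.card)
    {s : Finset (Fin d → ℝ)} (hs : s ⊆ X) (hc : s.card ≤ d + 1) :
    AffineIndependent ℝ ((↑) : s → (Fin d → ℝ)) := by
  obtain ⟨u, hsu, huX, hu⟩ := Finset.exists_subsuperset_card_eq hs hc hX
  have h := hgp u huX hu
  exact AffineIndependent.mono h (by exact_mod_cast hsu)

open Finset in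
lemma face_lemma {T : Finset (Fin d → ℝ)} {φ : (Fin d → ℝ) →ₗ[ℝ] ℝ} {c : ℝ}
    (hT : ∀ x ∈ T, φ x ≤ c) {p : Fin d → ℝ}
    (hp : p ∈ convexHull ℝ (T : Set (Fin d → ℝ))) (hpc : φ p = c) :
    p ∈ convexHull ℝ ((T.filter (fun x => φ x = c) : Finset (Fin d → ℝ)) : Set (Fin d → ℝ)) := by
  classical
  rw [Finset.convexHull_eq] at hp ⊢
  obtain ⟨w, hw0, hw1, hwp⟩ := hp
  rw [Finset.centerMass_eq_of_sum_1 _ _ hw1] at hwp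
  have hφp : ∑ x ∈ T, w x * φ x = c := by
    rw [← hpc, ← hwp, map_sum]
    simp [smul_eq_mul]
  have hzero : ∀ x ∈ T, w x * (c - φ x) = 0 := by
    rw [← Finset.sum_eq_zero_iff_of_nonneg]
    · have he : ∑ i ∈ T, w i * (c - φ i) = (∑ i ∈ T, w i) * c - ∑ i ∈ T, w i * φ i := by
        rw [Finset.sum_mul, ← Finset.sum_sub_distrib]
        exact Finset.sum_congr rfl fun i _ => by ring
      rw [he, hw1, hφp]; ring
    · intro x hx
      exact mul_nonneg (hw0 x hx) (sub_nonneg.2 (hT x hx))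
  have hkey : ∀ x ∈ T, φ x ≠ c → w x = 0 := by
    intro x hx hne
    have h := hzero x hx
    rcases mul_eq_zero.1 h with h' | h'
    · exact h'
    · exact absurd (by linarith [sub_eq_zero.1 h']) hne
  refine ⟨w, fun y hy => hw0 y (Finset.mem_filter.1 hy).1, ?_, ?_⟩
  · rw [← hw1]
    exact (Finset.sum_subset (Finset.filter_subset _ _)
      (fun x hx hnx => hkey x hx (fun h => hnx (Finset.mem_filter.2 ⟨hx, h⟩))))
  · have hs1 : ∑ y ∈ T.filter (fun x => φ x = c), w y = 1 := by
      rw [← hw1]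
      exact (Finset.sum_subset (Finset.filter_subset _ _)
        (fun x hx hnx => hkey x hx (fun h => hnx (Finset.mem_filter.2 ⟨hx, h⟩))))
    rw [Finset.centerMass_eq_of_sum_1 _ _ hs1, ← hwp]
    exact Finset.sum_subset (Finset.filter_subset _ _)
      (fun x hx hnx => by rw [hkey x hx (fun h => hnx (Finset.mem_filter.2 ⟨hx, h⟩)), zero_smul])

open Finset in
lemma sep_core {B C D Y : Finset (Fin d → ℝ)} (hBC : Disjoint B C)
    (hind : AffineIndependent ℝ ((↑) : D → (Fin d → ℝ)))
    (φ : (Fin d → ℝ) →ₗ[ℝ] ℝ) (c : ℝ)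
    (hB : ∀ x ∈ B \ Y, φ x ≤ c) (hC : ∀ x ∈ C \ Y, c ≤ φ x)
    (hBD : ∀ x ∈ B \ Y, φ x = c → x ∈ D) (hCD : ∀ x ∈ C \ Y, φ x = c → x ∈ D) :
    convexHull ℝ ((B \ Y : Finset (Fin d → ℝ)) : Set (Fin d → ℝ)) ∩
      convexHull ℝ ((C \ Y : Finset (Fin d → ℝ)) : Set (Fin d → ℝ)) = ∅ := by
  classical
  rw [Set.eq_empty_iff_forall_notMem]
  rintro p ⟨hpB, hpC⟩
  have hple : φ p ≤ c := by
    have : convexHull ℝ ((B \ Y : Finset (Fin d → ℝ)) : Set (Fin d → ℝ)) ⊆ {x | φ x ≤ c} :=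
      convexHull_min (fun x hx => hB x (by exact_mod_cast hx)) (convex_halfSpace_le φ.isLinear c)
    exact this hpB
  have hpge : c ≤ φ p := by
    have : convexHull ℝ ((C \ Y : Finset (Fin d → ℝ)) : Set (Fin d → ℝ)) ⊆ {x | c ≤ φ x} :=
      convexHull_min (fun x hx => hC x (by exact_mod_cast hx)) (convex_halfSpace_ge φ.isLinear c)
    exact this hpC
  have hpc : φ p = c := le_antisymm hple hpge
  -- p lies in hulls of the points on the hyperplane
  have hfB := face_lemma hB hpB hpc
  have hfC : p ∈ convexHull ℝ (((C \ Y).filter (fun x => φ x = c) : Finset (Fin d → ℝ)) :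
      Set (Fin d → ℝ)) := by
    have h := face_lemma (T := C \ Y) (φ := -φ) (c := -c)
      (fun x hx => by simpa using hC x hx) hpC (by simpa using hpc)
    have he : (C \ Y).filter (fun x => (-φ) x = -c) = (C \ Y).filter (fun x => φ x = c) := by
      apply Finset.filter_congr
      intro x _
      simp only [LinearMap.neg_apply, neg_eq_iff_eq_neg, neg_neg, eq_comm]
    rwa [he] at h
  set FB := (B \ Y).filter (fun x => φ x = c)
  set FC := (C \ Y).filter (fun x => φ x = c)
  have hFBD : FB ⊆ D := fun x hx => by
    have := Finset.mem_filter.1 hx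
    exact hBD x this.1 this.2
  have hFCD : FC ⊆ D := fun x hx => by
    have := Finset.mem_filter.1 hx
    exact hCD x this.1 this.2
  have hdisj : FB ∩ FC = ∅ := by
    rw [← Finset.disjoint_iff_inter_eq_empty]
    exact hBC.mono ((Finset.filter_subset _ _).trans (Finset.sdiff_subset))
      ((Finset.filter_subset _ _).trans (Finset.sdiff_subset))
  have h := hind.convexHull_inter hFBD hFCD
  rw [← Finset.coe_inter, hdisj] at h
  have : p ∈ convexHull ℝ ((∅ : Finset (Fin d → ℝ)) : Set (Fin d → ℝ)) := by
    rw [h]; exact ⟨hfB, hfC⟩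
  simpa using this

open Finset in
lemma gp_not_mem_span {X : Finset (Fin d → ℝ)} (hgp : GenPos X)
    {D : Finset (Fin d → ℝ)} (hD : D ⊆ X) (hDc : D.card = d)
    {x : Fin d → ℝ} (hx : x ∈ X) (hxD : x ∉ D) :
    x ∉ affineSpan ℝ (D : Set (Fin d → ℝ)) := by
  classical
  have hins : insert x D ⊆ X := Finset.insert_subset hx hD
  have hcard : (insert x D).card = d + 1 := by
    rw [Finset.card_insert_of_notMem hxD, hDc]
  have hind := hgp _ hins hcard
  have h := hind.notMem_affineSpan_diff ⟨x, by simp⟩ Set.univ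
  have himg : (fun p : ((insert x D : Finset (Fin d → ℝ)) : Set (Fin d → ℝ)) =>
      (p : Fin d → ℝ)) '' (Set.univ \ {⟨x, by simp⟩}) = (D : Set (Fin d → ℝ)) := by
    ext y
    constructor
    · rintro ⟨⟨z, hz⟩, ⟨-, hne⟩, rfl⟩
      simp only [Set.mem_singleton_iff, Subtype.mk.injEq] at hne
      have : z ∈ insert x D := by exact_mod_cast hz
      rcases Finset.mem_insert.1 this with h' | h'
      · exact absurd h' (by simpa using hne)
      · exact_mod_cast h'
    · intro hy
      have hyD : y ∈ D := by exact_mod_cast hy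
      refine ⟨⟨y, by simp [hyD]⟩, ⟨trivial, ?_⟩, rfl⟩
      simp only [Set.mem_singleton_iff, Subtype.mk.injEq]
      intro h'
      exact hxD (h' ▸ hyD)
  rwa [himg] at h

open Finset in
lemma hyperplane_exists (hd : 1 ≤ d) {D : Finset (Fin d → ℝ)} (hDc : D.card = d)
    (hind : AffineIndependent ℝ ((↑) : D → (Fin d → ℝ))) :
    ∃ (φ : (Fin d → ℝ) →ₗ[ℝ] ℝ) (c : ℝ), (∀ y ∈ D, φ y = c) ∧
      ∀ x : Fin d → ℝ, x ∉ affineSpan ℝ (D : Set (Fin d → ℝ)) → φ x ≠ c := by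
  classical
  set V := vectorSpan ℝ (D : Set (Fin d → ℝ)) with hV
  have hfr : Module.finrank ℝ V = d - 1 := by
    have hcard : Fintype.card D = (d - 1) + 1 := by
      rw [Fintype.card_coe, hDc]; omega
    have h := hind.finrank_vectorSpan hcard
    have he : Set.range (Subtype.val : D → (Fin d → ℝ)) = (D : Set (Fin d → ℝ)) := by
      ext y; simp
    rw [hV]
    rw [← he]
    exact h
  have hfrE : Module.finrank ℝ (Fin d → ℝ) = d := Module.finrank_fin_fun ℝ
  have hVlt : V < ⊤ := by
    rw [lt_top_iff_ne_top]
    intro h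
    rw [h, finrank_top] at hfr
    omega
  obtain ⟨φ, hφne, hφbot⟩ := Submodule.exists_dual_map_eq_bot_of_lt_top hVlt inferInstance
  have hVker : V ≤ LinearMap.ker φ := by
    intro v hv
    have : φ v ∈ V.map φ := Submodule.mem_map_of_mem hv
    rw [hφbot] at this
    simpa using this
  have hkerV : LinearMap.ker φ = V := by
    refine (Submodule.eq_of_le_of_finrank_le hVker ?_).symm
    have hklt := Submodule.finrank_lt (K := ℝ) (V := Fin d → ℝ) (s := LinearMap.ker φ)
      (fun h => hφne (LinearMap.ker_eq_top.1 h))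
    rw [hfrE] at hklt
    omega
  have hDne : D.Nonempty := by rw [← Finset.card_pos, hDc]; omega
  obtain ⟨p0, hp0⟩ := hDne
  refine ⟨φ, φ p0, ?_, ?_⟩
  · intro y hy
    have hmem : y - p0 ∈ V :=
      vsub_mem_vectorSpan ℝ (by exact_mod_cast hy) (by exact_mod_cast hp0)
    have := hVker hmem
    rw [LinearMap.mem_ker, map_sub] at this
    linarith [this]
  · intro x hx hc
    apply hx
    have hmem : x - p0 ∈ V := by
      rw [← hkerV, LinearMap.mem_ker, map_sub]
      linarith [hc]
    have hp0' : p0 ∈ affineSpan ℝ (D : Set (Fin d → ℝ)) :=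
      mem_affineSpan ℝ (by exact_mod_cast hp0)
    have : x - p0 ∈ (affineSpan ℝ (D : Set (Fin d → ℝ))).direction := by
      rwa [direction_affineSpan]
    exact (AffineSubspace.vsub_right_mem_direction_iff_mem hp0' x).1 this

open Finset in
lemma pair_separation {t : ℕ} {X B C : Finset (Fin d → ℝ)} (hd : 1 ≤ d)
    (hX : d + 1 ≤ X.card) (hgp : GenPos X) (hBX : B ⊆ X) (hCX : C ⊆ X)
    (hBC : Disjoint B C) (hst : B.card + C.card ≤ 2 * t + d) :
    ∃ Y : Finset (Fin d → ℝ), Y ⊆ B ∪ C ∧ Y.card ≤ t ∧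
      convexHull ℝ ((B \ Y : Finset (Fin d → ℝ)) : Set (Fin d → ℝ)) ∩
        convexHull ℝ ((C \ Y : Finset (Fin d → ℝ)) : Set (Fin d → ℝ)) = ∅ := by
  have hSX : B ∪ C ⊆ X := Finset.union_subset hBX hCX
  have hScard : (B ∪ C).card = B.card + C.card := Finset.card_union_of_disjoint hBC
  by_cases hsmall : (B ∪ C).card ≤ d + 1
  · -- few points: all of S is affinely independent
    refine ⟨∅, Finset.empty_subset _, by simp, ?_⟩
    have hind := gp_subset hgp hX hSX hsmall
    rw [Finset.sdiff_empty, Finset.sdiff_empty,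
      ← AffineIndependent.convexHull_inter (R := ℝ) hind Finset.subset_union_left
        Finset.subset_union_right]
    have hBCset : ((B : Set (Fin d → ℝ)) ∩ (C : Set (Fin d → ℝ))) = ∅ := by
      rw [Set.eq_empty_iff_forall_notMem]
      rintro x ⟨h1, h2⟩
      exact Finset.disjoint_left.1 hBC (Finset.mem_coe.1 h1) (Finset.mem_coe.1 h2)
    rw [hBCset, convexHull_empty]
  · classical
    push_neg at hsmall
    obtain ⟨D, hDS, hDcard⟩ := Finset.exists_subset_card_eq
      (le_of_lt (by omega : d < (B ∪ C).card))
    have hDX : D ⊆ X := hDS.trans hSX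
    have hindD := gp_subset hgp hX hDX (by omega)
    obtain ⟨φ, c, hDc, hoff⟩ := hyperplane_exists hd hDcard hindD
    have hoffS : ∀ x ∈ B ∪ C, x ∉ D → φ x ≠ c := fun x hxS hxD =>
      hoff x (gp_not_mem_span hgp hDX hDcard (hSX hxS) hxD)
    set Y₁ := B.filter (fun x => c < φ x) ∪ C.filter (fun x => φ x < c) with hY₁
    set Y₂ := B.filter (fun x => φ x < c) ∪ C.filter (fun x => c < φ x) with hY₂
    -- cardinality bound
    have hcards : Y₁.card + Y₂.card ≤ 2 * t := by
      have h1 : Y₁.card = (B.filter (fun x => c < φ x)).card +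
          (C.filter (fun x => φ x < c)).card :=
        Finset.card_union_of_disjoint (hBC.mono (Finset.filter_subset _ _)
          (Finset.filter_subset _ _))
      have h2 : Y₂.card = (B.filter (fun x => φ x < c)).card +
          (C.filter (fun x => c < φ x)).card :=
        Finset.card_union_of_disjoint (hBC.mono (Finset.filter_subset _ _)
          (Finset.filter_subset _ _))
      have hB' : (B.filter (fun x => c < φ x)).card + (B.filter (fun x => φ x < c)).card
          ≤ (B \ D).card := by
        rw [← Finset.card_union_of_disjoint]
        · apply Finset.card_le_card
          intro x hx
          rcases Finset.mem_union.1 hx with h' | h' <;>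
          · obtain ⟨hxB, hlt⟩ := Finset.mem_filter.1 h'
            refine Finset.mem_sdiff.2 ⟨hxB, fun hxD => ?_⟩
            have := hDc x hxD
            rw [this] at hlt
            exact lt_irrefl _ hlt
        · rw [Finset.disjoint_left]
          intro a ha hb
          have h1 := (Finset.mem_filter.1 ha).2
          have h2 := (Finset.mem_filter.1 hb).2
          linarith
      have hC' : (C.filter (fun x => φ x < c)).card + (C.filter (fun x => c < φ x)).card
          ≤ (C \ D).card := by
        rw [← Finset.card_union_of_disjoint]
        · apply Finset.card_le_card
          intro x hx
          rcases Finset.mem_union.1 hx with h' | h' <;>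
          · obtain ⟨hxC, hlt⟩ := Finset.mem_filter.1 h'
            refine Finset.mem_sdiff.2 ⟨hxC, fun hxD => ?_⟩
            have := hDc x hxD
            rw [this] at hlt
            exact lt_irrefl _ hlt
        · rw [Finset.disjoint_left]
          intro a ha hb
          have h1 := (Finset.mem_filter.1 ha).2
          have h2 := (Finset.mem_filter.1 hb).2
          linarith
      have hBCD : (B \ D).card + (C \ D).card ≤ 2 * t := by
        have hdisjBD : Disjoint (B \ D) (C \ D) :=
          hBC.mono (Finset.sdiff_subset) (Finset.sdiff_subset)
        have hun : (B \ D) ∪ (C \ D) = (B ∪ C) \ D := by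
          rw [Finset.union_sdiff_distrib]
        have := Finset.card_union_of_disjoint hdisjBD
        rw [hun] at this
        have hcardsd : ((B ∪ C) \ D).card = (B ∪ C).card - d := by
          rw [Finset.card_sdiff_of_subset hDS, hDcard]
        omega
      omega
    -- choose the lighter of the two deletion sets
    have hsub₁ : Y₁ ⊆ B ∪ C :=
      Finset.union_subset ((Finset.filter_subset _ _).trans Finset.subset_union_left)
        ((Finset.filter_subset _ _).trans Finset.subset_union_right)
    have hsub₂ : Y₂ ⊆ B ∪ C :=
      Finset.union_subset ((Finset.filter_subset _ _).trans Finset.subset_union_left)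
        ((Finset.filter_subset _ _).trans Finset.subset_union_right)
    have key : ∀ x ∈ B ∪ C, φ x = c → x ∈ D := by
      intro x hx hxc
      by_contra hxD
      exact hoffS x hx hxD hxc
    rcases le_or_gt Y₁.card t with hle | hlt
    · refine ⟨Y₁, hsub₁, hle, ?_⟩
      apply sep_core hBC hindD φ c
      · intro x hx
        obtain ⟨hxB, hxY⟩ := Finset.mem_sdiff.1 hx
        by_contra hgt
        exact hxY (Finset.mem_union_left _ (Finset.mem_filter.2 ⟨hxB, by linarith⟩))
      · intro x hx
        obtain ⟨hxC, hxY⟩ := Finset.mem_sdiff.1 hx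
        by_contra hgt
        exact hxY (Finset.mem_union_right _ (Finset.mem_filter.2 ⟨hxC, by linarith⟩))
      · intro x hx hxc
        exact key x (Finset.mem_union_left _ (Finset.mem_sdiff.1 hx).1) hxc
      · intro x hx hxc
        exact key x (Finset.mem_union_right _ (Finset.mem_sdiff.1 hx).1) hxc
    · refine ⟨Y₂, hsub₂, by omega, ?_⟩
      apply sep_core hBC hindD (-φ) (-c)
      · intro x hx
        obtain ⟨hxB, hxY⟩ := Finset.mem_sdiff.1 hx
        simp only [LinearMap.neg_apply, neg_le_neg_iff]
        by_contra hgt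
        exact hxY (Finset.mem_union_left _ (Finset.mem_filter.2 ⟨hxB, by linarith⟩))
      · intro x hx
        obtain ⟨hxC, hxY⟩ := Finset.mem_sdiff.1 hx
        simp only [LinearMap.neg_apply, neg_le_neg_iff]
        by_contra hgt
        exact hxY (Finset.mem_union_right _ (Finset.mem_filter.2 ⟨hxC, by linarith⟩))
      · intro x hx hxc
        refine key x (Finset.mem_union_left _ (Finset.mem_sdiff.1 hx).1) ?_
        have h' : -(φ x) = -c := by simpa using hxc
        linarith [h']
      · intro x hx hxc
        refine key x (Finset.mem_union_right _ (Finset.mem_sdiff.1 hx).1) ?_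
        have h' : -(φ x) = -c := by simpa using hxc
        linarith [h']

/-- Proposition 3.5: if `X` is a set of `n ≥ r(d+2)` points in general position in
`ℝ^d` and some partition of `X` into `r` parts tolerates `t` deletions, then
`⌊n/r⌋ ≥ t + ⌊d/2⌋`; consequently `T(n,d,r) ≤ ⌊n/r⌋ − ⌊d/2⌋`. -/
theorem tolerance_upper_bound {d r t n : ℕ} (hd : 1 ≤ d) (hr : 2 ≤ r)
    (hn : r * (d + 2) ≤ n)
    (X : Finset (Fin d → ℝ)) (hcard : X.card = n) (hgp : GenPos X)
    (A : Fin r → Finset (Fin d → ℝ))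
    (hdisj : ∀ i j, i ≠ j → Disjoint (A i) (A j))
    (hcover : X = Finset.univ.biUnion A)
    (htol : ∀ Y : Finset (Fin d → ℝ), Y ⊆ X → Y.card ≤ t →
      (⋂ i : Fin r, convexHull ℝ ((A i \ Y : Finset (Fin d → ℝ)) : Set (Fin d → ℝ))).Nonempty) :
    t + d / 2 ≤ n / r := by
  obtain ⟨m, rfl⟩ : ∃ m, r = m + 2 := ⟨r - 2, by omega⟩
  have hXd : d + 1 ≤ X.card := by
    have h2 : 2 * (d + 2) ≤ (m + 2) * (d + 2) := Nat.mul_le_mul_right _ hr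
    omega
  have hAX : ∀ i, A i ⊆ X := fun i => by
    rw [hcover]; exact Finset.subset_biUnion_of_mem A (Finset.mem_univ i)
  -- the key pairwise inequality
  have key : ∀ i j : Fin (m + 2), i ≠ j →
      2 * t + d + 1 ≤ (A i).card + (A j).card := by
    intro i j hij
    by_contra hcon
    push_neg at hcon
    obtain ⟨Y, hYsub, hYt, hYsep⟩ := pair_separation (t := t) hd hXd hgp (hAX i) (hAX j)
      (hdisj i j hij) (by omega)
    have hYX : Y ⊆ X := hYsub.trans (Finset.union_subset (hAX i) (hAX j))
    obtain ⟨p, hp⟩ := htol Y hYX hYt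
    rw [Set.mem_iInter] at hp
    have : p ∈ convexHull ℝ ((A i \ Y : Finset (Fin d → ℝ)) : Set (Fin d → ℝ)) ∩
        convexHull ℝ ((A j \ Y : Finset (Fin d → ℝ)) : Set (Fin d → ℝ)) := ⟨hp i, hp j⟩
    rw [hYsep] at this
    exact this
  -- total count
  have hsum : ∑ i, (A i).card = n := by
    rw [← hcard, hcover, Finset.card_biUnion (fun i _ j _ hij => hdisj i j hij)]
  -- double counting
  have hL : (m + 2) * ((m + 1) * (2 * t + d + 1)) ≤
      ∑ i : Fin (m + 2), ∑ j ∈ Finset.univ.erase i, ((A i).card + (A j).card) := by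
    calc (m + 2) * ((m + 1) * (2 * t + d + 1))
        = ∑ _i : Fin (m + 2), (m + 1) * (2 * t + d + 1) := by
          rw [Finset.sum_const, Finset.card_univ, Fintype.card_fin, smul_eq_mul]
      _ ≤ _ := by
          apply Finset.sum_le_sum
          intro i _
          calc (m + 1) * (2 * t + d + 1)
              = ∑ _j ∈ Finset.univ.erase i, (2 * t + d + 1) := by
                rw [Finset.sum_const, Finset.card_erase_of_mem (Finset.mem_univ i),
                  Finset.card_univ, Fintype.card_fin, smul_eq_mul]
                congr 1
            _ ≤ ∑ j ∈ Finset.univ.erase i, ((A i).card + (A j).card) := by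
                apply Finset.sum_le_sum
                intro j hj
                exact key i j (Finset.ne_of_mem_erase hj).symm
  have hLval : (∑ i : Fin (m + 2), ∑ j ∈ Finset.univ.erase i, ((A i).card + (A j).card)) + n
      = (m + 1) * n + (m + 2) * n := by
    have h1 : ∀ i : Fin (m + 2), ∑ j ∈ Finset.univ.erase i, ((A i).card + (A j).card)
        = (m + 1) * (A i).card + ∑ j ∈ Finset.univ.erase i, (A j).card := by
      intro i
      rw [Finset.sum_add_distrib, Finset.sum_const, Finset.card_erase_of_mem (Finset.mem_univ i),
        Finset.card_univ, Fintype.card_fin, smul_eq_mul]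
      congr 1
    have h2 : ∀ i : Fin (m + 2), (∑ j ∈ Finset.univ.erase i, (A j).card) + (A i).card = n := by
      intro i
      rw [Finset.sum_erase_add _ _ (Finset.mem_univ i), hsum]
    calc (∑ i : Fin (m + 2), ∑ j ∈ Finset.univ.erase i, ((A i).card + (A j).card)) + n
        = (∑ i : Fin (m + 2), ((m + 1) * (A i).card +
            ∑ j ∈ Finset.univ.erase i, (A j).card)) + n := by
          rw [Finset.sum_congr rfl (fun i _ => h1 i)]
      _ = ((m + 1) * ∑ i, (A i).card) +
            ((∑ i : Fin (m + 2), ((∑ j ∈ Finset.univ.erase i, (A j).card) + (A i).card))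
              - ∑ i, (A i).card) + n := by
          rw [Finset.sum_add_distrib, Finset.mul_sum, Finset.sum_add_distrib]
          omega
      _ = (m + 1) * n + (m + 2) * n := by
          rw [Finset.sum_congr rfl (fun i _ => h2 i), hsum, Finset.sum_const, Finset.card_univ,
            Fintype.card_fin, smul_eq_mul]
          have hle : n ≤ (m + 2) * n := Nat.le_mul_of_pos_left n (by omega)
          omega
  -- deduce r * (2t + d + 1) ≤ 2n
  have hmain : (m + 2) * (2 * t + d + 1) ≤ 2 * n := by
    have h1 : (m + 1) * ((m + 2) * (2 * t + d + 1)) + n ≤ (m + 1) * (2 * n) + n := by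
      have e1 : (m + 2) * ((m + 1) * (2 * t + d + 1))
          = (m + 1) * ((m + 2) * (2 * t + d + 1)) := by ring
      have e2 : (m + 1) * n + (m + 2) * n = (m + 1) * (2 * n) + n := by ring
      omega
    have h2 : (m + 1) * ((m + 2) * (2 * t + d + 1)) ≤ (m + 1) * (2 * n) := by omega
    exact Nat.le_of_mul_le_mul_left h2 (by omega)
  -- final arithmetic
  rw [Nat.le_div_iff_mul_le (by omega : 0 < m + 2)]
  have hdq : d / 2 * 2 ≤ d := Nat.div_mul_le_self d 2
  have h2A : 2 * ((t + d / 2) * (m + 2)) ≤ (m + 2) * (2 * t + d + 1) := by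
    calc 2 * ((t + d / 2) * (m + 2)) = (m + 2) * (2 * t + d / 2 * 2) := by ring
      _ ≤ (m + 2) * (2 * t + d + 1) := Nat.mul_le_mul_left _ (by omega)
  exact Nat.le_of_mul_le_mul_left (le_trans h2A hmain) (by omega)
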